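/- arXiv:1001.5417 — 2 statements merged into one kernel-verified Lean document; each statement's English description precedes it below -/
import Mathlib

section
/- Define g(t) := t(1+t²)^{1/2}(1+2t²) − ln(t + (1+t²)^{1/2}) for t ≥ 0. Then for all t ≥ 0: (3/5) t⁴ · min{(2/5)t, 1} ≤ g(t) − (8/3)t³ ≤ 2 t⁴ · min{(2/5)t, 1}. -/
noncomputable section

/-- The function `g` in Daubechies' kinetic energy bound. -/
def gDau (t : ℝ) : ℝ :=
  t * Real.sqrt (1 + t ^ 2) * (1 + 2 * t ^ 2) - Real.log (t + Real.sqrt (1 + t ^ 2))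

lemma mono_le {f f' : ℝ → ℝ} (hf : ∀ x, HasDerivAt f (f' x) x)
    {a b : ℝ} (hab : a ≤ b) (h' : ∀ x, a ≤ x → x ≤ b → 0 ≤ f' x) : f a ≤ f b := by
  have hmono : MonotoneOn f (Set.Icc a b) := by
    apply monotoneOn_of_deriv_nonneg (convex_Icc a b)
    · exact fun x _ => (hf x).continuousAt.continuousWithinAt
    · exact fun x _ => (hf x).differentiableAt.differentiableWithinAt
    · intro x hx
      rw [interior_Icc] at hx
      rw [(hf x).deriv]
      exact h' x hx.1.le hx.2.le
  exact hmono ⟨le_refl a, hab⟩ ⟨hab, le_refl b⟩ hab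

lemma aux_facts (t : ℝ) :
    0 < Real.sqrt (1 + t ^ 2) ∧ Real.sqrt (1 + t ^ 2) ^ 2 = 1 + t ^ 2 ∧
      0 < t + Real.sqrt (1 + t ^ 2) := by
  have h1 : (0:ℝ) < 1 + t ^ 2 := by positivity
  have hs0 : 0 < Real.sqrt (1 + t ^ 2) := Real.sqrt_pos.2 h1
  have hs : Real.sqrt (1 + t ^ 2) ^ 2 = 1 + t ^ 2 := Real.sq_sqrt h1.le
  refine ⟨hs0, hs, ?_⟩
  nlinarith [hs0, hs]

lemma hasDerivAt_gDau (t : ℝ) :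
    HasDerivAt gDau (8 * t ^ 2 * Real.sqrt (1 + t ^ 2)) t := by
  obtain ⟨hs0, hs, hts⟩ := aux_facts t
  set s := Real.sqrt (1 + t ^ 2) with hsdef
  have h1 : (0:ℝ) < 1 + t ^ 2 := by positivity
  have hd1 : HasDerivAt (fun x : ℝ => 1 + x ^ 2) (2 * t) t := by
    simpa using ((hasDerivAt_pow 2 t).const_add 1)
  have hsqrt : HasDerivAt (fun x : ℝ => Real.sqrt (1 + x ^ 2)) ((1 / (2 * s)) * (2 * t)) t :=
    (Real.hasDerivAt_sqrt h1.ne').comp t hd1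
  have hd2 : HasDerivAt (fun x : ℝ => 1 + 2 * x ^ 2) (2 * (2 * t)) t := by
    simpa using (((hasDerivAt_pow 2 t).const_mul 2).const_add 1)
  have hA : HasDerivAt (fun x : ℝ => x * Real.sqrt (1 + x ^ 2) * (1 + 2 * x ^ 2))
      ((1 * s + t * ((1 / (2 * s)) * (2 * t))) * (1 + 2 * t ^ 2) + t * s * (2 * (2 * t))) t :=
    ((hasDerivAt_id t).mul hsqrt).mul hd2
  have hB : HasDerivAt (fun x : ℝ => Real.log (x + Real.sqrt (1 + x ^ 2)))
      ((1 + (1 / (2 * s)) * (2 * t)) / (t + s)) t :=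
    ((hasDerivAt_id t).add hsqrt).log hts.ne'
  have := hA.sub hB
  refine this.congr_deriv (Eq.symm ?_)
  field_simp
  linear_combination (t + s) * (2 * t ^ 2 - 1) * hs

lemma gDau_zero : gDau 0 = 0 := by
  simp [gDau]

lemma sqrt_ub1 (x : ℝ) : Real.sqrt (1 + x ^ 2) ≤ 1 + x ^ 2 / 2 := by
  rw [show (1:ℝ) + x ^ 2 / 2 = Real.sqrt ((1 + x ^ 2 / 2) ^ 2) from
    (Real.sqrt_sq (by positivity)).symm]
  exact Real.sqrt_le_sqrt (by nlinarith)

lemma sqrt_ub2 (x : ℝ) (hx : 0 ≤ x) : Real.sqrt (1 + x ^ 2) ≤ 1 + x := by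
  rw [show (1:ℝ) + x = Real.sqrt ((1 + x) ^ 2) from (Real.sqrt_sq (by positivity)).symm]
  exact Real.sqrt_le_sqrt (by nlinarith)

lemma sqrt_lb1 (x : ℝ) (hx : x ^ 2 ≤ 280 / 9) :
    1 + 3 / 20 * x ^ 2 ≤ Real.sqrt (1 + x ^ 2) := by
  rw [show (1:ℝ) + 3 / 20 * x ^ 2 = Real.sqrt ((1 + 3 / 20 * x ^ 2) ^ 2) from
    (Real.sqrt_sq (by positivity)).symm]
  exact Real.sqrt_le_sqrt (by nlinarith)

lemma sqrt_lb2 (x : ℝ) : x ≤ Real.sqrt (1 + x ^ 2) := by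
  have h := Real.sqrt_le_sqrt (show x ^ 2 ≤ 1 + x ^ 2 by linarith)
  rw [Real.sqrt_sq_eq_abs] at h
  exact (le_abs_self x).trans h

lemma boundB1 (t : ℝ) (ht : 0 ≤ t) : gDau t - 8 / 3 * t ^ 3 ≤ 4 / 5 * t ^ 5 := by
  have hf : ∀ x : ℝ, HasDerivAt (fun x => 8 / 3 * x ^ 3 + 4 / 5 * x ^ 5 - gDau x)
      (8 * x ^ 2 + 4 * x ^ 4 - 8 * x ^ 2 * Real.sqrt (1 + x ^ 2)) x := by
    intro x
    have h1 := ((hasDerivAt_pow 3 x).const_mul (8/3 : ℝ)).add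
      ((hasDerivAt_pow 5 x).const_mul (4/5 : ℝ))
    have := h1.sub (hasDerivAt_gDau x)
    refine this.congr_deriv (Eq.symm ?_)
    push_cast; ring
  have := mono_le hf ht (fun x hx _ => by nlinarith [sqrt_ub1 x, sq_nonneg x])
  simp only [gDau_zero] at this
  linarith

lemma boundB2 (t : ℝ) (ht : 0 ≤ t) : gDau t - 8 / 3 * t ^ 3 ≤ 2 * t ^ 4 := by
  have hf : ∀ x : ℝ, HasDerivAt (fun x => 8 / 3 * x ^ 3 + 2 * x ^ 4 - gDau x)
      (8 * x ^ 2 + 8 * x ^ 3 - 8 * x ^ 2 * Real.sqrt (1 + x ^ 2)) x := by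
    intro x
    have h1 := ((hasDerivAt_pow 3 x).const_mul (8/3 : ℝ)).add
      ((hasDerivAt_pow 4 x).const_mul (2 : ℝ))
    have := h1.sub (hasDerivAt_gDau x)
    refine this.congr_deriv (Eq.symm ?_)
    push_cast; ring
  have := mono_le hf ht (fun x hx _ => by nlinarith [sqrt_ub2 x hx, sq_nonneg x])
  simp only [gDau_zero] at this
  linarith

lemma boundB3 (t : ℝ) (ht : 0 ≤ t) (ht' : t ≤ 5 / 2) :
    6 / 25 * t ^ 5 ≤ gDau t - 8 / 3 * t ^ 3 := by
  have hf : ∀ x : ℝ, HasDerivAt (fun x => gDau x - (8 / 3 * x ^ 3 + 6 / 25 * x ^ 5))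
      (8 * x ^ 2 * Real.sqrt (1 + x ^ 2) - 8 * x ^ 2 - 6 / 5 * x ^ 4) x := by
    intro x
    have h1 := ((hasDerivAt_pow 3 x).const_mul (8/3 : ℝ)).add
      ((hasDerivAt_pow 5 x).const_mul (6/25 : ℝ))
    have := (hasDerivAt_gDau x).sub h1
    refine this.congr_deriv (Eq.symm ?_)
    push_cast; ring
  have h' : ∀ x, 0 ≤ x → x ≤ t →
      0 ≤ 8 * x ^ 2 * Real.sqrt (1 + x ^ 2) - 8 * x ^ 2 - 6 / 5 * x ^ 4 := by
    intro x hx hxt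
    have hx2 : x ^ 2 ≤ 280 / 9 := by nlinarith
    nlinarith [sqrt_lb1 x hx2, sq_nonneg x]
  have := mono_le hf ht h'
  simp only [gDau_zero] at this
  linarith

lemma boundB4 (t : ℝ) (ht : 0 ≤ t) : 2 * t ^ 4 ≤ gDau t := by
  have hf : ∀ x : ℝ, HasDerivAt (fun x => gDau x - 2 * x ^ 4)
      (8 * x ^ 2 * Real.sqrt (1 + x ^ 2) - 8 * x ^ 3) x := by
    intro x
    have := (hasDerivAt_gDau x).sub ((hasDerivAt_pow 4 x).const_mul (2 : ℝ))
    refine this.congr_deriv (Eq.symm ?_)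
    push_cast; ring
  have := mono_le hf ht (fun x hx _ => by nlinarith [sqrt_lb2 x, sq_nonneg x])
  simp only [gDau_zero] at this
  linarith

/-- two-sided bound on `g(t) − (8/3)t³`. -/
theorem gDau_two_sided_bound (t : ℝ) (ht : 0 ≤ t) :
    3 / 5 * t ^ 4 * min (2 / 5 * t) 1 ≤ gDau t - 8 / 3 * t ^ 3 ∧
      gDau t - 8 / 3 * t ^ 3 ≤ 2 * t ^ 4 * min (2 / 5 * t) 1 := by
  rcases le_or_gt t (5 / 2) with h | h
  · rw [min_eq_left (by linarith)]
    constructor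
    · nlinarith [boundB3 t ht h]
    · nlinarith [boundB1 t ht]
  · rw [min_eq_right (by linarith)]
    have h3 : (0:ℝ) < t ^ 3 := by positivity
    constructor
    · nlinarith [boundB4 t ht]
    · nlinarith [boundB2 t ht]

end
end

section
/- Define K₂(t) := t ∫₀^∞ e^{−t√(s²+1)} s² ds for t > 0 (a modified Bessel function of the second kind). Let α > 0, r > 0 and 0 ≤ β₁ < β₂ < β₃ < β₄ ≤ ∞, and for 0 ≤ a < b ≤ ∞ write Σ_r(a,b) := {x ∈ ℝ³ : a r ≤ |x| ≤ b r} (with the upper constraint omitted when b = ∞). Then ∬_{x ∈ Σ_r(β₁,β₂), y ∈ Σ_r(β₃,β₄)} K₂(α⁻¹|x−y|)² dx dy ≤ ((4³π)²/3) · ((β₂³ − β₁³)/(β₃ − β₂)) · α⁴ r² e^{−α⁻¹ r (β₃ − β₂)}. -/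
open MeasureTheory

noncomputable section

abbrev R3 : Type := EuclideanSpace ℝ (Fin 3)

/-- The modified Bessel function `K₂` via its integral representation. -/
def K2 (t : ℝ) : ℝ := t * ∫ s in Set.Ioi (0 : ℝ), Real.exp (-t * Real.sqrt (s ^ 2 + 1)) * s ^ 2

open Set Metric

section Aux

lemma K2_aux_nonneg {t : ℝ} (ht : 0 ≤ t) : 0 ≤ K2 t :=
  mul_nonneg ht (integral_nonneg fun s => mul_nonneg (Real.exp_nonneg _) (sq_nonneg _))

lemma K2_aux_sqrt_half_le (s : ℝ) (hs : 0 ≤ s) : (1 + s) / 2 ≤ Real.sqrt (s ^ 2 + 1) := by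
  have h : ((1 + s) / 2) ^ 2 ≤ s ^ 2 + 1 := by nlinarith
  calc (1 + s) / 2 = Real.sqrt (((1 + s) / 2) ^ 2) := (Real.sqrt_sq (by positivity)).symm
    _ ≤ Real.sqrt (s ^ 2 + 1) := Real.sqrt_le_sqrt h

lemma K2_aux_le {t : ℝ} (ht : 0 < t) : K2 t ≤ 16 * (t ^ 2)⁻¹ * Real.exp (-(t / 2)) := by
  have ht2 : 0 < t / 2 := by positivity
  set M : ℝ → ℝ := fun s => Real.exp (-(t / 2)) * (s ^ 2 * Real.exp (-(t / 2 * s))) with hM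
  have hMint : Integrable M (volume.restrict (Ioi (0:ℝ))) := by
    have h0 : IntegrableOn (fun s : ℝ => s ^ (2:ℝ) * Real.exp (-(t/2) * s ^ (1:ℝ))) (Ioi 0) :=
      integrableOn_rpow_mul_exp_neg_mul_rpow (by norm_num) one_pos ht2
    have h1 : IntegrableOn (fun s : ℝ => s ^ 2 * Real.exp (-(t / 2 * s))) (Ioi 0) := by
      refine h0.congr_fun (fun s hs => ?_) measurableSet_Ioi
      dsimp only
      rw [Real.rpow_one, Real.rpow_two]
      ring_nf
    exact h1.const_mul _
  have hMval : ∫ s in Ioi (0:ℝ), M s = Real.exp (-(t / 2)) * (16 * (t ^ 3)⁻¹) := by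
    rw [hM, integral_const_mul]
    congr 1
    have h0 : ∫ s in Ioi (0:ℝ), s ^ ((3:ℝ) - 1) * Real.exp (-(t / 2 * s)) =
        (1 / (t / 2)) ^ (3:ℝ) * Real.Gamma 3 :=
      Real.integral_rpow_mul_exp_neg_mul_Ioi (by norm_num) ht2
    have h1 : ∫ s in Ioi (0:ℝ), s ^ 2 * Real.exp (-(t / 2 * s)) =
        (1 / (t / 2)) ^ (3:ℝ) * Real.Gamma 3 := by
      rw [← h0]
      refine setIntegral_congr_fun measurableSet_Ioi (fun s hs => ?_)
      have : s ^ ((3:ℝ) - 1) = s ^ 2 := by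
        rw [show (3:ℝ) - 1 = ((2:ℕ):ℝ) by norm_num, Real.rpow_natCast]
      rw [this]
    rw [h1]
    have hg : Real.Gamma 3 = 2 := by
      rw [show (3:ℝ) = ((2:ℕ):ℝ) + 1 by norm_num, Real.Gamma_nat_eq_factorial]
      norm_num
    rw [hg, show (3:ℝ) = ((3:ℕ):ℝ) by norm_num, Real.rpow_natCast]
    field_simp
    ring
  have hmono : ∫ s in Ioi (0:ℝ), Real.exp (-t * Real.sqrt (s ^ 2 + 1)) * s ^ 2 ≤
      ∫ s in Ioi (0:ℝ), M s := by
    refine integral_mono_of_nonneg ?_ hMint ?_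
    · exact Filter.Eventually.of_forall fun s => mul_nonneg (Real.exp_nonneg _) (sq_nonneg _)
    · refine (ae_restrict_iff' measurableSet_Ioi).2 (Filter.Eventually.of_forall fun s hs => ?_)
      have hs0 : (0:ℝ) ≤ s := le_of_lt hs
      have hsq := K2_aux_sqrt_half_le s hs0
      have hexp : Real.exp (-t * Real.sqrt (s ^ 2 + 1)) ≤ Real.exp (-(t/2) + -(t/2*s)) := by
        apply Real.exp_le_exp.2
        have : -(t/2) + -(t/2*s) = -t * ((1+s)/2) := by ring
        rw [this]
        apply mul_le_mul_of_nonpos_left hsq (by linarith)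
      calc Real.exp (-t * Real.sqrt (s ^ 2 + 1)) * s ^ 2
          ≤ Real.exp (-(t/2) + -(t/2*s)) * s ^ 2 :=
            mul_le_mul_of_nonneg_right hexp (sq_nonneg s)
        _ = M s := by rw [Real.exp_add]; ring
  calc K2 t ≤ t * (Real.exp (-(t / 2)) * (16 * (t ^ 3)⁻¹)) := by
        rw [K2]
        exact mul_le_mul_of_nonneg_left (hMval ▸ hmono) ht.le
    _ = 16 * (t ^ 2)⁻¹ * Real.exp (-(t / 2)) := by field_simp

lemma K2_aux_gamma52 : Real.Gamma ((3:ℕ) / 2 + 1) = 3 / 4 * Real.sqrt Real.pi := by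
  have h1 : ((3:ℕ):ℝ) / 2 + 1 = 3/2 + 1 := by norm_num
  rw [h1, Real.Gamma_add_one (by norm_num)]
  have h2 : (3:ℝ)/2 = 1/2 + 1 := by norm_num
  rw [h2, Real.Gamma_add_one (by norm_num), Real.Gamma_one_half_eq]
  ring

lemma K2_aux_vol_cball (R : ℝ) (hR : 0 ≤ R) :
    (volume (closedBall (0:R3) R)).toReal = 4/3 * Real.pi * R^3 := by
  have hπ := Real.pi_pos
  rw [EuclideanSpace.volume_closedBall]
  have hcard : Fintype.card (Fin 3) = 3 := by simp
  rw [hcard, K2_aux_gamma52]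
  have hnn : (0:ℝ) ≤ Real.sqrt Real.pi ^ 3 / (3 / 4 * Real.sqrt Real.pi) := by positivity
  rw [ENNReal.toReal_mul, ENNReal.toReal_pow, ENNReal.toReal_ofReal hR, ENNReal.toReal_ofReal hnn]
  have hs : (0:ℝ) < Real.sqrt Real.pi := Real.sqrt_pos.mpr hπ
  have h3 : Real.sqrt Real.pi ^ 3 = Real.pi * Real.sqrt Real.pi := by
    rw [pow_succ, Real.sq_sqrt hπ.le]
  rw [h3]
  field_simp

lemma K2_aux_vol_ball1 : (volume (ball (0:R3) 1)).toReal = 4/3 * Real.pi := by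
  rw [← Measure.addHaar_closedBall_eq_addHaar_ball]
  have := K2_aux_vol_cball 1 zero_le_one
  simpa using this

lemma K2_aux_radial_meas (d : ℝ) :
    AEStronglyMeasurable (fun z : R3 => Set.indicator (Ici d) (fun u : ℝ => (u^4)⁻¹) ‖z‖)
      volume :=
  ((Measurable.indicator ((measurable_id.pow_const 4).inv) measurableSet_Ici).comp
    measurable_norm).aestronglyMeasurable

lemma K2_aux_radial_intgr (d : ℝ) (hd : 0 < d) :
    Integrable (fun z : R3 => Set.indicator (Ici d) (fun u : ℝ => (u^4)⁻¹) ‖z‖) volume := by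
  have hfin : ((Module.finrank ℝ R3 : ℝ)) < (4:ℝ) := by
    rw [finrank_euclideanSpace]; norm_num
  have hg : Integrable (fun z : R3 => ((1+d)/d)^4 * (1 + ‖z‖) ^ (-(4:ℝ))) volume :=
    (integrable_one_add_norm hfin).const_mul _
  refine hg.mono' (K2_aux_radial_meas d) (Filter.Eventually.of_forall fun z => ?_)
  set u := ‖z‖ with hu
  have hu0 : 0 ≤ u := norm_nonneg z
  by_cases h : u ∈ Ici d
  · rw [Set.indicator_apply, if_pos h]
    replace h : d ≤ u := h
    have hu' : 0 < u := lt_of_lt_of_le hd h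
    have h1u : (0:ℝ) < 1 + u := by linarith
    rw [Real.norm_eq_abs, abs_of_nonneg (by positivity), Real.rpow_neg h1u.le,
      show (4:ℝ) = ((4:ℕ):ℝ) by norm_num, Real.rpow_natCast]
    rw [mul_comm, ← div_eq_inv_mul, le_div_iff₀ (by positivity), div_eq_mul_inv]
    have h4 : (1+u)^4 ≤ ((1+d)*d⁻¹)^4 * u^4 := by
      rw [← mul_pow]
      apply pow_le_pow_left₀ h1u.le
      rw [mul_assoc, ← div_eq_inv_mul, mul_comm (1+d), div_mul_eq_mul_div, le_div_iff₀ hd]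
      nlinarith
    have h5 := mul_le_mul_of_nonneg_right h4 (inv_nonneg.2 (pow_nonneg hu0 4))
    rw [mul_assoc, mul_inv_cancel₀ (by positivity), mul_one] at h5
    linarith [h5]
  · rw [Set.indicator_apply, if_neg h]
    simp only [norm_zero]
    positivity

lemma K2_aux_radial_val (d : ℝ) (hd : 0 < d) :
    (∫ z : R3, Set.indicator (Ici d) (fun u : ℝ => (u^4)⁻¹) ‖z‖) = 4 * Real.pi * d⁻¹ := by
  rw [integral_fun_norm_addHaar volume (Set.indicator (Ici d) (fun u : ℝ => (u^4)⁻¹))]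
  have hrk : Module.finrank ℝ R3 = 3 := finrank_euclideanSpace_fin
  rw [hrk, measureReal_def, K2_aux_vol_ball1]
  have h1 : ∀ y : ℝ, y ^ (3-1) • Set.indicator (Ici d) (fun u : ℝ => (u^4)⁻¹) y
      = Set.indicator (Ici d) (fun u : ℝ => u^2 * (u^4)⁻¹) y := by
    intro y
    rw [smul_eq_mul, Set.indicator_mul_right]
  simp_rw [h1]
  have hsub : Ici d ⊆ Ioi (0:ℝ) := fun y hy => lt_of_lt_of_le hd hy
  rw [setIntegral_indicator measurableSet_Ici, Set.inter_eq_self_of_subset_right hsub,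
    integral_Ici_eq_integral_Ioi]
  have h2 : ∫ y in Ioi d, y^2 * (y^4)⁻¹ = ∫ y in Ioi d, y ^ (-2:ℝ) := by
    refine setIntegral_congr_fun measurableSet_Ioi (fun y hy => ?_)
    have hy0 : 0 < y := lt_trans hd hy
    rw [Real.rpow_neg hy0.le, show (2:ℝ) = ((2:ℕ):ℝ) by norm_num, Real.rpow_natCast]
    field_simp
  rw [h2, integral_Ioi_rpow_of_lt (by norm_num) hd]
  rw [show (-2:ℝ) + 1 = -1 by norm_num, Real.rpow_neg_one]
  simp only [smul_eq_mul]
  field_simp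
  rw [nsmul_eq_mul]
  field_simp
  norm_num

end Aux

/-- exponential off-diagonal decay estimate for `K₂` integrated over two
separated annuli `Σ_r(β₁,β₂)` and `Σ_r(β₃,β₄)` (with `β₄ = ⊤` allowed). -/
theorem K2_annuli_estimate
    (α r : ℝ) (hα : 0 < α) (hr : 0 < r)
    (β₁ β₂ β₃ : ℝ) (β₄ : EReal)
    (h1 : 0 ≤ β₁) (h12 : β₁ < β₂) (h23 : β₂ < β₃) (h34 : (β₃ : EReal) < β₄) :
    (∫ x in {x : R3 | β₁ * r ≤ ‖x‖ ∧ ‖x‖ ≤ β₂ * r},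
        ∫ y in {y : R3 | β₃ * r ≤ ‖y‖ ∧ (‖y‖ : EReal) ≤ β₄ * (r : EReal)},
          K2 (α⁻¹ * ‖x - y‖) ^ 2) ≤
      (4 ^ 3 * Real.pi) ^ 2 / 3 * ((β₂ ^ 3 - β₁ ^ 3) / (β₃ - β₂)) * α ^ 4 * r ^ 2 *
        Real.exp (-(α⁻¹ * r * (β₃ - β₂))) := by
  have hβ32 : 0 < β₃ - β₂ := sub_pos.mpr h23
  set d : ℝ := r * (β₃ - β₂) with hd
  have hd0 : 0 < d := by positivity
  set Ex : ℝ := Real.exp (-(α⁻¹ * r * (β₃ - β₂))) with hEx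
  have hEx0 : 0 < Ex := Real.exp_pos _
  set c : ℝ := 256 * α ^ 4 * Ex with hc
  have hc0 : 0 ≤ c := by positivity
  set A : Set R3 := {x : R3 | β₁ * r ≤ ‖x‖ ∧ ‖x‖ ≤ β₂ * r} with hA
  set B : Set R3 := {y : R3 | β₃ * r ≤ ‖y‖ ∧ (‖y‖ : EReal) ≤ β₄ * (r : EReal)} with hB
  set h : ℝ → ℝ := Set.indicator (Ici d) (fun u : ℝ => (u ^ 4)⁻¹) with hh
  have hh_nonneg : ∀ u, 0 ≤ h u := fun u =>
    Set.indicator_nonneg (fun v _ => by positivity) u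
  have hG : Integrable (fun z : R3 => c * h ‖z‖) volume :=
    (K2_aux_radial_intgr d hd0).const_mul c
  have hGval : (∫ z : R3, c * h ‖z‖) = c * (4 * Real.pi * d⁻¹) := by
    rw [integral_const_mul, K2_aux_radial_val d hd0]
  have hBmeas : MeasurableSet B := by
    refine (measurableSet_le measurable_const measurable_norm).inter ?_
    exact (measurable_coe_real_ereal.comp measurable_norm) measurableSet_Iic
  have hAmeas : MeasurableSet A :=
    (measurableSet_le measurable_const measurable_norm).inter
      (measurableSet_le measurable_norm measurable_const)
  -- translated integrability
  have hGx : ∀ x : R3, Integrable (fun y : R3 => c * h ‖y - x‖) volume := by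
    intro x
    have hemb := (MeasurableEquiv.addRight (-x)).measurableEmbedding
    have hmp : MeasurePreserving (fun y : R3 => y + (-x)) volume volume :=
      measurePreserving_add_right (volume : Measure R3) (-x)
    have := (hmp.integrable_comp_emb hemb (g := fun z : R3 => c * h ‖z‖)).2 hG
    have heq : (fun y : R3 => c * h ‖y - x‖) =
        (fun z : R3 => c * h ‖z‖) ∘ (fun y : R3 => y + (-x)) := by
      funext y; simp [sub_eq_add_neg, Function.comp]
    rw [heq]
    exact this
  -- inner bound
  have inner : ∀ x ∈ A, (∫ y in B, K2 (α⁻¹ * ‖x - y‖) ^ 2) ≤ c * (4 * Real.pi * d⁻¹) := by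
    intro x hx
    have hx2 : ‖x‖ ≤ β₂ * r := hx.2
    have step1 : (∫ y in B, K2 (α⁻¹ * ‖x - y‖) ^ 2) ≤ ∫ y in B, c * h ‖y - x‖ := by
      refine integral_mono_of_nonneg (Filter.Eventually.of_forall fun y => sq_nonneg _)
        ((hGx x).integrableOn) ?_
      refine (ae_restrict_iff' hBmeas).2 (Filter.Eventually.of_forall fun y hy => ?_)
      have hy3 : β₃ * r ≤ ‖y‖ := hy.1
      have hnorm : d ≤ ‖y - x‖ := by
        have hns := norm_sub_norm_le y x
        rw [hd]; nlinarith
      have hxy : ‖x - y‖ = ‖y - x‖ := norm_sub_rev x y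
      set n := ‖y - x‖ with hn
      have hn0 : 0 < n := lt_of_lt_of_le hd0 hnorm
      have ht0 : 0 < α⁻¹ * n := by positivity
      have hK := K2_aux_le ht0
      have hKn := K2_aux_nonneg ht0.le
      have hsq : K2 (α⁻¹ * ‖x - y‖) ^ 2 ≤
          (16 * ((α⁻¹ * n) ^ 2)⁻¹ * Real.exp (-(α⁻¹ * n / 2))) ^ 2 := by
        rw [hxy]
        exact pow_le_pow_left₀ hKn hK 2
      have hid : (16 * ((α⁻¹ * n) ^ 2)⁻¹ * Real.exp (-(α⁻¹ * n / 2))) ^ 2 =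
          256 * α ^ 4 * (n ^ 4)⁻¹ * Real.exp (-(α⁻¹ * n)) := by
        have e2 : Real.exp (-(α⁻¹ * n / 2)) ^ 2 = Real.exp (-(α⁻¹ * n)) := by
          rw [pow_two, ← Real.exp_add]
          congr 1
          ring
        rw [mul_pow, mul_pow, e2]
        field_simp
        ring
      have hexp : Real.exp (-(α⁻¹ * n)) ≤ Ex := by
        rw [hEx]
        apply Real.exp_le_exp.2
        have harg : α⁻¹ * r * (β₃ - β₂) = α⁻¹ * d := by rw [hd]; ring
        rw [harg]
        have := mul_le_mul_of_nonneg_left hnorm (inv_nonneg.2 hα.le)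
        linarith
      have hhy : h n = (n ^ 4)⁻¹ := by
        rw [hh, Set.indicator_apply, if_pos (mem_Ici.mpr hnorm)]
      calc K2 (α⁻¹ * ‖x - y‖) ^ 2 ≤ 256 * α ^ 4 * (n ^ 4)⁻¹ * Real.exp (-(α⁻¹ * n)) := by
            rw [← hid]; exact hsq
        _ ≤ 256 * α ^ 4 * (n ^ 4)⁻¹ * Ex :=
            mul_le_mul_of_nonneg_left hexp (by positivity)
        _ = c * h ‖y - x‖ := by rw [← hn, hhy, hc]; ring
    have step2 : (∫ y in B, c * h ‖y - x‖) ≤ ∫ y : R3, c * h ‖y - x‖ :=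
      setIntegral_le_integral (hGx x)
        (Filter.Eventually.of_forall fun y => mul_nonneg hc0 (hh_nonneg _))
    have step3 : (∫ y : R3, c * h ‖y - x‖) = c * (4 * Real.pi * d⁻¹) := by
      rw [integral_sub_right_eq_self (fun z : R3 => c * h ‖z‖) x]
      exact hGval
    linarith
  -- outer bound
  have hAsub : A ⊆ closedBall (0:R3) (β₂ * r) := by
    intro x hx
    rw [mem_closedBall_zero_iff]
    exact hx.2
  have hAvol_lt : volume A < ⊤ :=
    lt_of_le_of_lt (measure_mono hAsub) measure_closedBall_lt_top
  have outer : (∫ x in A, ∫ y in B, K2 (α⁻¹ * ‖x - y‖) ^ 2) ≤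
      (volume A).toReal * (c * (4 * Real.pi * d⁻¹)) := by
    have hstep : (∫ x in A, ∫ y in B, K2 (α⁻¹ * ‖x - y‖) ^ 2) ≤
        ∫ _x in A, c * (4 * Real.pi * d⁻¹) := by
      refine integral_mono_of_nonneg ?_ (integrableOn_const hAvol_lt.ne) ?_
      · exact Filter.Eventually.of_forall fun x => integral_nonneg fun y => sq_nonneg _
      · exact (ae_restrict_iff' hAmeas).2 (Filter.Eventually.of_forall inner)
    rwa [setIntegral_const, smul_eq_mul] at hstep
  -- compute volume of A
  have hb2r : (0:ℝ) ≤ β₂ * r := by nlinarith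
  have hb1r : (0:ℝ) ≤ β₁ * r := by positivity
  have hAeq : A = closedBall (0:R3) (β₂ * r) \ ball (0:R3) (β₁ * r) := by
    ext x
    simp only [hA, Set.mem_setOf_eq, Set.mem_diff, mem_closedBall_zero_iff, mem_ball_zero_iff,
      not_lt]
    tauto
  have hsubba : ball (0:R3) (β₁ * r) ⊆ closedBall (0:R3) (β₂ * r) :=
    ball_subset_closedBall.trans (closedBall_subset_closedBall (by nlinarith))
  have hvolA : (volume A).toReal = 4/3 * Real.pi * ((β₂ * r)^3 - (β₁ * r)^3) := by
    rw [hAeq, measure_diff hsubba measurableSet_ball.nullMeasurableSet measure_ball_lt_top.ne,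
      ENNReal.toReal_sub_of_le (measure_mono hsubba) measure_closedBall_lt_top.ne,
      K2_aux_vol_cball _ hb2r]
    rw [← Measure.addHaar_closedBall_eq_addHaar_ball, K2_aux_vol_cball _ hb1r]
    ring
  refine le_trans outer (le_of_eq ?_)
  rw [hvolA, hc, hd]
  have hrne : r ≠ 0 := hr.ne'
  have hbne : β₃ - β₂ ≠ 0 := hβ32.ne'
  field_simp
  ring
end
end
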